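/- Let x* be a sparsest solution of the problem: minimize ‖x‖₀ subject to ‖y − Ax‖₂ ≤ ε and Bx ≤ b, and let S = supp(x*). Then Null(A_S) ∩ Null(B_S) = {0}, i.e., the submatrix formed by stacking A_S on top of B_S has full column rank. -/

import Mathlib

open Matrix Finset

/-- The ℓ₂ norm of a finite real vector. -/
noncomputable def l2 {ι : Type*} [Fintype ι] (v : ι → ℝ) : ℝ := Real.sqrt (∑ i, v i ^ 2)

/-- The ℓ₀ "norm": number of nonzero components. -/
noncomputable def l0 {n : ℕ} (x : Fin n → ℝ) : ℕ :=
  (Finset.univ.filter fun i => x i ≠ 0).card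

/-- The support of a vector as a finset. -/
noncomputable def spt {n : ℕ} (x : Fin n → ℝ) : Finset (Fin n) :=
  Finset.univ.filter fun i => x i ≠ 0

/-- Membership in the feasible set T = {x : ‖y - Ax‖₂ ≤ ε, Bx ≤ b}. -/
def feasible {m l n : ℕ} (A : Matrix (Fin m) (Fin n) ℝ) (B : Matrix (Fin l) (Fin n) ℝ)
    (y : Fin m → ℝ) (b : Fin l → ℝ) (ε : ℝ) (x : Fin n → ℝ) : Prop :=
  l2 (y - A.mulVec x) ≤ ε ∧ ∀ i, B.mulVec x i ≤ b i

/-- x is a sparsest solution: feasible and minimizing ‖·‖₀ over T. -/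
noncomputable def sparsest {m l n : ℕ} (A : Matrix (Fin m) (Fin n) ℝ)
    (B : Matrix (Fin l) (Fin n) ℝ) (y : Fin m → ℝ) (b : Fin l → ℝ) (ε : ℝ)
    (x : Fin n → ℝ) : Prop :=
  feasible A B y b ε x ∧ ∀ z, feasible A B y b ε z → l0 x ≤ l0 z

/-- Column submatrix indexed by S. -/
def colSub {m n : ℕ} (A : Matrix (Fin m) (Fin n) ℝ) (S : Finset (Fin n)) :
    Matrix (Fin m) {j // j ∈ S} ℝ :=
  A.submatrix id Subtype.val

/-- Row-and-column submatrix with rows in I and columns in S. -/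
def rcSub {l n : ℕ} (B : Matrix (Fin l) (Fin n) ℝ) (I : Finset (Fin l))
    (S : Finset (Fin n)) : Matrix {i // i ∈ I} {j // j ∈ S} ℝ :=
  B.submatrix Subtype.val Subtype.val

/-- Active index set of the constraints Bx ≤ b at x. -/
noncomputable def activeSet {l n : ℕ} (B : Matrix (Fin l) (Fin n) ℝ) (b : Fin l → ℝ)
    (x : Fin n → ℝ) : Finset (Fin l) :=
  Finset.univ.filter fun i => B.mulVec x i = b i

/-- necessary condition: Null(A_S) ∩ Null(B_S) = {0}, i.e. the stacked
matrix [A_S; B_S] has full column rank. -/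
theorem stmt0 {m l n : ℕ} (A : Matrix (Fin m) (Fin n) ℝ) (B : Matrix (Fin l) (Fin n) ℝ)
    (y : Fin m → ℝ) (b : Fin l → ℝ) (ε : ℝ) (hε : 0 ≤ ε)
    (xs : Fin n → ℝ) (hxs : sparsest A B y b ε xs)
    (S : Finset (Fin n)) (hS : S = spt xs) :
    ∀ z : {j // j ∈ S} → ℝ,
      (colSub A S).mulVec z = 0 → (colSub B S).mulVec z = 0 → z = 0 := by
  intro z hA0 hB0
  by_contra hz
  obtain ⟨j0, hj0⟩ : ∃ j, z j ≠ 0 := by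
    by_contra h; push_neg at h; exact hz (funext h)
  classical
  set w : Fin n → ℝ := fun j => if h : j ∈ S then z ⟨j, h⟩ else 0 with hw
  have key : ∀ {k : ℕ} (M : Matrix (Fin k) (Fin n) ℝ),
      M.mulVec w = (colSub M S).mulVec z := by
    intro k M
    funext i
    simp only [Matrix.mulVec, dotProduct, colSub, Matrix.submatrix_apply, id_eq]
    rw [Finset.univ_eq_attach,
      Finset.sum_congr rfl (fun (x : {j // j ∈ S}) _ => by
        simp [hw, dif_pos x.2] : ∀ x ∈ S.attach, M i x.1 * z x = M i x.1 * w x.1),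
      Finset.sum_attach S (fun j => M i j * w j)]
    exact (Finset.sum_subset (Finset.subset_univ S)
      (fun j _ hj => by simp [hw, dif_neg hj])).symm
  have hAw : A.mulVec w = 0 := by rw [key]; exact hA0
  have hBw : B.mulVec w = 0 := by rw [key]; exact hB0
  set t : ℝ := -(xs j0.1 / z j0) with ht
  set x' : Fin n → ℝ := xs + t • w with hx'
  have hfeas : feasible A B y b ε x' := by
    have hA' : A.mulVec x' = A.mulVec xs := by
      rw [hx', Matrix.mulVec_add, Matrix.mulVec_smul, hAw]; simp
    have hB' : B.mulVec x' = B.mulVec xs := by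
      rw [hx', Matrix.mulVec_add, Matrix.mulVec_smul, hBw]; simp
    exact ⟨by rw [hA']; exact hxs.1.1, fun i => by rw [hB']; exact hxs.1.2 i⟩
  have hwj0 : w j0.1 = z j0 := by simp [hw, dif_pos j0.2]
  have hx'j0 : x' j0.1 = 0 := by
    simp only [hx', Pi.add_apply, Pi.smul_apply, hwj0, smul_eq_mul, ht]
    field_simp
    ring
  have hsub : spt x' ⊆ S.erase j0.1 := by
    intro j hj
    simp only [spt, Finset.mem_filter, Finset.mem_univ, true_and] at hj
    by_cases hjS : j ∈ S
    · refine Finset.mem_erase.2 ⟨?_, hjS⟩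
      rintro rfl; exact hj hx'j0
    · exfalso
      apply hj
      have hxsj : xs j = 0 := by
        by_contra hxsj
        exact hjS (hS ▸ (by simp [spt, hxsj]))
      simp [hx', hxsj, hw, dif_neg hjS]
  have hlt : l0 x' < l0 xs := by
    have h1 : l0 x' ≤ (S.erase j0.1).card := Finset.card_le_card hsub
    have h2 : (S.erase j0.1).card < S.card := Finset.card_erase_lt_of_mem j0.2
    have h3 : l0 xs = S.card := by rw [hS]; rfl
    omega
  exact absurd (hxs.2 x' hfeas) (by omega)
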